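/- Let (G,∼,R) be a gentle framed turbulence chart. Then every connected component of G contains at least one fringe edge. -/

import Mathlib

open Finset

/-- A turbulence chart: a finite undirected graph given by half-edges `H` with a
fixed-point-free involution `op` pairing half-edges into edges, a vertex map `vert`,
and at each internal vertex a partition of its half-edges into two nonempty classes,
encoded by `side : H → Bool`. -/
structure TurbChart where
  V : Type
  H : Type
  [fintV : Fintype V]
  [decV : DecidableEq V]
  [fintH : Fintype H]
  [decH : DecidableEq H]
  vert : H → V
  op : H → H
  side : H → Bool
  op_op : ∀ h, op (op h) = h
  op_ne : ∀ h, op h ≠ h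
  vert_cover : ∀ v, ∃ h, vert h = v
  sides_nonempty : ∀ v,
    2 ≤ (Finset.univ.filter fun h => vert h = v).card →
    ∀ b : Bool, ∃ h, vert h = v ∧ side h = b

attribute [instance] TurbChart.fintV TurbChart.decV TurbChart.fintH TurbChart.decH

namespace TurbChart

variable (T : TurbChart)

def degree (v : T.V) : ℕ := (Finset.univ.filter fun h => T.vert h = v).card

def Fringe (v : T.V) : Prop := T.degree v = 1

def Internal (v : T.V) : Prop := 2 ≤ T.degree v

instance : DecidablePred T.Fringe := fun v =>
  decidable_of_iff (T.degree v = 1) Iff.rfl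

instance : DecidablePred T.Internal := fun v =>
  decidable_of_iff (2 ≤ T.degree v) Iff.rfl

/-- A flow on a turbulence chart: a labelling of edges (encoded as an `op`-invariant
function on half-edges) conserving flow across the two classes at each internal vertex. -/
def IsFlow (F : T.H → ℝ) : Prop :=
  (∀ h, F (T.op h) = F h) ∧
  ∀ v, T.Internal v →
    ∑ h ∈ Finset.univ.filter (fun h => T.vert h = v ∧ T.side h = true), F h =
    ∑ h ∈ Finset.univ.filter (fun h => T.vert h = v ∧ T.side h = false), F h

/-- The strength of a flow: half the sum of its values over fringe incidences. -/
noncomputable def strength (F : T.H → ℝ) : ℝ :=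
  (1 / 2) * ∑ h ∈ Finset.univ.filter (fun h => T.Fringe (T.vert h)), F h

/-- The turbulence polyhedron `F₁(G,∼)`: nonnegative flows of strength 1. -/
def unitFlows : Set (T.H → ℝ) :=
  {F | T.IsFlow F ∧ (∀ h, 0 ≤ F h) ∧ T.strength F = 1}

/-- A string: a walk along oriented edges (an oriented edge is encoded by its tail
half-edge `a`, its head half-edge being `op a`) which crosses the class partition at
each internal vertex it passes through. -/
def IsString (l : List T.H) : Prop :=
  List.Chain' (fun a b => T.vert (T.op a) = T.vert b ∧ T.side (T.op a) ≠ T.side b) l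

/-- A route: a nonempty string starting and ending at fringe vertices. -/
def IsRoute (l : List T.H) : Prop :=
  T.IsString l ∧ l ≠ [] ∧
  (∀ h ∈ l.head?, T.Fringe (T.vert h)) ∧
  (∀ h ∈ l.getLast?, T.Fringe (T.vert (T.op h)))

/-- A band: a nonempty cyclically composable string which is not a proper power. -/
def IsBand (l : List T.H) : Prop :=
  l ≠ [] ∧ T.IsString (l ++ l) ∧
  ¬ ∃ (c : List T.H) (k : ℕ), 2 ≤ k ∧ l = (List.replicate k c).flatten

def Acyclic : Prop := ¬ ∃ l, T.IsBand l

/-- The indicator vector of a walk: multiplicity of each edge (in either orientation). -/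
noncomputable def indic (l : List T.H) : T.H → ℝ :=
  fun h => ((l.count h + l.count (T.op h) : ℕ) : ℝ)

/-- The inverse of a string. -/
def inv (l : List T.H) : List T.H := (l.map T.op).reverse

end TurbChart

/-- A framing on a turbulence chart: a linear order on each class of half-edges. -/
structure Framing (T : TurbChart) where
  lt : T.H → T.H → Prop
  lt_irrefl : ∀ h, ¬ lt h h
  lt_trans : ∀ a b c, lt a b → lt b c → lt a c
  lt_compat : ∀ a b, lt a b → T.vert a = T.vert b ∧ T.side a = T.side b
  lt_total : ∀ a b, a ≠ b → T.vert a = T.vert b → T.side a = T.side b →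
    lt a b ∨ lt b a

namespace TurbChart

variable (T : TurbChart)

/-- Substrings of a trail (a route, or a band where substrings of any power are allowed),
up to inverses. -/
def Substr (t : List T.H) (isBand : Bool) (s : List T.H) : Prop :=
  if isBand then
    ∃ k : ℕ, s <:+: (List.replicate k t).flatten ∨ s <:+: T.inv (List.replicate k t).flatten
  else s <:+: t ∨ s <:+: T.inv t

/-- `p` contains the "low" member of an incompatibility whose "high" member lies in `q`. -/
def IsIncompatPair (R : Framing T) (p q : List T.H × Bool) : Prop :=
  ∃ (e₁ e₂ f₁ f₂ : T.H) (s : List T.H),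
    R.lt (T.op e₁) (T.op e₂) ∧ R.lt f₁ f₂ ∧
    T.IsString (e₁ :: (s ++ [f₁])) ∧ T.IsString (e₂ :: (s ++ [f₂])) ∧
    T.Substr p.1 p.2 (e₁ :: (s ++ [f₁])) ∧ T.Substr q.1 q.2 (e₂ :: (s ++ [f₂]))

def Compatible (R : Framing T) (p q : List T.H × Bool) : Prop :=
  ¬ (T.IsIncompatPair R p q ∨ T.IsIncompatPair R q p)

/-- A trail: a route (`Bool` component `false`) or a band (`true`). -/
def IsTrail (t : List T.H × Bool) : Prop :=
  if t.2 then T.IsBand t.1 else T.IsRoute t.1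

noncomputable def indicT (t : List T.H × Bool) : T.H → ℝ := T.indic t.1

def RouteEquiv (l₁ l₂ : List T.H) : Prop := l₂ = l₁ ∨ l₂ = T.inv l₁

def BandEquiv (l₁ l₂ : List T.H) : Prop :=
  ∃ x y, l₁ = x ++ y ∧ (l₂ = y ++ x ∨ l₂ = T.inv (y ++ x))

def TrailEquiv (t₁ t₂ : List T.H × Bool) : Prop :=
  t₁.2 = t₂.2 ∧ (if t₁.2 then T.BandEquiv t₁.1 t₂.1 else T.RouteEquiv t₁.1 t₂.1)

/-- A bundle: a set of pairwise compatible (hence self-compatible) trails, taken with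
distinct representatives up to equivalence of trails. -/
def IsBundle (R : Framing T) (S : Finset (List T.H × Bool)) : Prop :=
  (∀ t ∈ S, T.IsTrail t) ∧
  (∀ t₁ ∈ S, ∀ t₂ ∈ S, T.Compatible R t₁ t₂) ∧
  (∀ t₁ ∈ S, ∀ t₂ ∈ S, T.TrailEquiv t₁ t₂ → t₁ = t₂)

/-- The bundle simplihedron `Δ₁(K̄)`: unit bundle combinations of the bundle. -/
def unitBundleSimplihedron (S : Finset (List T.H × Bool)) : Set (T.H → ℝ) :=
  {F | ∃ a : List T.H × Bool → ℝ,
    (∀ t ∈ S, 0 ≤ a t) ∧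
    F = ∑ t ∈ S, a t • T.indicT t ∧
    ∑ t ∈ S.filter (fun t => t.2 = false), a t = 1}

/-- Every nonnegative flow has at most one representation as a positive bundle
combination (up to equivalence of trails). -/
def UniquePositiveCombos (R : Framing T) : Prop :=
  ∀ (S₁ S₂ : Finset (List T.H × Bool)) (a₁ a₂ : List T.H × Bool → ℝ),
    T.IsBundle R S₁ → T.IsBundle R S₂ →
    (∀ t ∈ S₁, 0 < a₁ t) → (∀ t ∈ S₂, 0 < a₂ t) →
    (∑ t ∈ S₁, a₁ t • T.indicT t) = (∑ t ∈ S₂, a₂ t • T.indicT t) →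
    (∀ t₁ ∈ S₁, ∃ t₂ ∈ S₂, T.TrailEquiv t₁ t₂ ∧ a₁ t₁ = a₂ t₂) ∧
    (∀ t₂ ∈ S₂, ∃ t₁ ∈ S₁, T.TrailEquiv t₁ t₂ ∧ a₁ t₁ = a₂ t₂)

end TurbChart

namespace TurbChart

variable (T : TurbChart)

/-- A half-edge is lonely if it is at a fringe vertex or alone in its class. -/
def Lonely (h : T.H) : Prop :=
  T.Fringe (T.vert h) ∨ ∀ g, g ≠ h → T.vert g = T.vert h → T.side g ≠ T.side h

/-- A half-edge is high if some other half-edge of its class lies below it. -/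
def High (R : Framing T) (h : T.H) : Prop := ∃ g, R.lt g h

/-- A half-edge is low if some other half-edge of its class lies above it. -/
def Low (R : Framing T) (h : T.H) : Prop := ∃ g, R.lt h g

/-- An oriented edge (tail half-edge `h`, head half-edge `op h`) is ascending if its
tail is low or lonely and its head is high or lonely. -/
def Ascending (R : Framing T) (h : T.H) : Prop :=
  (T.Low R h ∨ T.Lonely h) ∧ (T.High R (T.op h) ∨ T.Lonely (T.op h))

def Descending (R : Framing T) (h : T.H) : Prop :=
  (T.High R h ∨ T.Lonely h) ∧ (T.Low R (T.op h) ∨ T.Lonely (T.op h))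

/-- Fullness: each class at each internal vertex has exactly two half-edges. -/
def Full : Prop := ∀ v, T.Internal v → ∀ b : Bool,
  (Finset.univ.filter fun h => T.vert h = v ∧ T.side h = b).card = 2

/-- A gentle framed turbulence chart. -/
def Gentle (R : Framing T) : Prop :=
  T.Full ∧
  (∀ h, T.Internal (T.vert h) ∨ T.Internal (T.vert (T.op h))) ∧
  (∀ h, T.Ascending R h ∨ T.Descending R h) ∧
  (∀ l, T.IsBand l →
    ¬ (∀ h ∈ l, T.Ascending R h) ∧ ¬ (∀ h ∈ l, T.Descending R h))

/-- Adjacency of vertices in the underlying undirected graph. -/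
def Adj (u w : T.V) : Prop := ∃ h, T.vert h = u ∧ T.vert (T.op h) = w

end TurbChart


section AuxGentle

open Relation

lemma TurbChart.internal_of_not_fringe {T : TurbChart} {w : T.V} (h : T.H)
    (hw : T.vert h = w) (hnf : ¬ T.Fringe w) : T.Internal w := by
  have hpos : 0 < T.degree w :=
    Finset.card_pos.2 ⟨h, by simp [TurbChart.degree, hw]⟩
  have h1 : T.degree w ≠ 1 := hnf
  unfold TurbChart.Internal
  omega

lemma TurbChart.exists_ascending {T : TurbChart} {R : Framing T} (hg : T.Gentle R)
    {v : T.V} (hv : T.Internal v) (b : Bool) :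
    ∃ g, T.vert g = v ∧ T.side g = b ∧ T.Ascending R g := by
  have hcard := hg.1 v hv b
  rw [Finset.card_eq_two] at hcard
  obtain ⟨g₁, g₂, hne, hset⟩ := hcard
  have hmem : ∀ x : T.H, (T.vert x = v ∧ T.side x = b) ↔ (x = g₁ ∨ x = g₂) := by
    intro x
    constructor
    · intro hx
      have hx' : x ∈ ({g₁, g₂} : Finset T.H) := by
        rw [← hset]; simp [hx.1, hx.2]
      simpa using hx'
    · intro hx
      have hx' : x ∈ Finset.univ.filter fun h => T.vert h = v ∧ T.side h = b := by
        rw [hset]; simp only [Finset.mem_insert, Finset.mem_singleton]; tauto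
      simpa using hx'
  have hg₁ := (hmem g₁).2 (Or.inl rfl)
  have hg₂ := (hmem g₂).2 (Or.inr rfl)
  have main : ∀ a c : T.H, a ≠ c → (∀ x, T.vert x = v ∧ T.side x = b → x = a ∨ x = c) →
      T.vert a = v → T.side a = b → T.vert c = v → T.side c = b →
      R.lt a c → T.Ascending R a := by
    intro a c hac hx hav hab hcv hcb hlt
    rcases hg.2.2.1 a with h | h
    · exact h
    · exfalso
      rcases h.1 with ⟨x, hxlt⟩ | hlon
      · obtain ⟨hxv, hxs⟩ := R.lt_compat x a hxlt
        rcases hx x ⟨hxv.trans hav, hxs.trans hab⟩ with rfl | rfl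
        · exact R.lt_irrefl _ hxlt
        · exact R.lt_irrefl _ (R.lt_trans _ _ _ hlt hxlt)
      · rcases hlon with hfr | halone
        · rw [hav] at hfr
          have h2 := hv
          unfold TurbChart.Internal at h2
          unfold TurbChart.Fringe at hfr
          omega
        · exact halone c (fun hh => hac hh.symm) (hcv.trans hav.symm) (by rw [hcb, hab])
  rcases R.lt_total g₁ g₂ hne (hg₁.1.trans hg₂.1.symm) (hg₁.2.trans hg₂.2.symm) with hlt | hlt
  · exact ⟨g₁, hg₁.1, hg₁.2,
      main g₁ g₂ hne (fun x hx => (hmem x).1 hx) hg₁.1 hg₁.2 hg₂.1 hg₂.2 hlt⟩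
  · exact ⟨g₂, hg₂.1, hg₂.2,
      main g₂ g₁ hne.symm (fun x hx => ((hmem x).1 hx).symm) hg₂.1 hg₂.2 hg₁.1 hg₁.2 hlt⟩

lemma TurbChart.exists_band_of_cyclic {T : TurbChart} (Asc : T.H → Prop) :
    ∀ (N : ℕ) (l : List T.H), l.length ≤ N → l ≠ [] → T.IsString (l ++ l) →
      (∀ x ∈ l, Asc x) → ∃ p, T.IsBand p ∧ ∀ x ∈ p, Asc x := by
  intro N
  induction N with
  | zero =>
    intro l hl hne _ _
    exact absurd (List.length_eq_zero_iff.1 (Nat.le_zero.1 hl)) hne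
  | succ N ih =>
    intro l hl hne hstr hasc
    by_cases hp : ∃ (c : List T.H) (k : ℕ), 2 ≤ k ∧ l = (List.replicate k c).flatten
    · obtain ⟨c, k, hk, heq⟩ := hp
      have hcne : c ≠ [] := by
        rintro rfl
        simp at heq
        exact hne heq
      obtain ⟨k', rfl⟩ : ∃ k', k = k' + 2 := ⟨k - 2, by omega⟩
      have hlc : l = (c ++ c) ++ (List.replicate k' c).flatten := by
        rw [heq]
        simp [List.replicate_succ]
      have hpre : c ++ c <+: l := ⟨(List.replicate k' c).flatten, hlc.symm⟩
      have hlenl : l.length = (k' + 2) * c.length := by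
        rw [heq]
        simp [List.length_flatten, List.map_replicate, List.sum_replicate, smul_eq_mul]
      have hc : 0 < c.length := List.length_pos_iff.2 hcne
      have hlen : c.length ≤ N := by
        have : c.length < l.length := by
          have h2 : 2 * c.length ≤ (k' + 2) * c.length :=
            Nat.mul_le_mul_right _ (by omega)
          omega
        omega
      have hstr' : T.IsString (c ++ c) :=
        List.IsChain.prefix hstr (hpre.trans (l.prefix_append l))
      exact ih c hlen hcne hstr' (fun x hx => hasc x (by rw [hlc]; simp [hx]))
    · exact ⟨l, ⟨hne, hstr, hp⟩, hasc⟩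

end AuxGentle

/-- Every connected component of a gentle framed turbulence chart
contains at least one fringe edge. -/
theorem gentle_component_has_fringe_edge (T : TurbChart) (R : Framing T)
    (hg : T.Gentle R) :
    ∀ v : T.V, ∃ h : T.H, Relation.ReflTransGen T.Adj v (T.vert h) ∧
      (T.Fringe (T.vert h) ∨ T.Fringe (T.vert (T.op h))) := by
  intro v
  by_contra hcon
  push_neg at hcon
  obtain ⟨h₀, hh₀⟩ := T.vert_cover v
  have hreach₀ : Relation.ReflTransGen T.Adj v (T.vert h₀) := by
    rw [hh₀]
  have hvint : T.Internal v :=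
    TurbChart.internal_of_not_fringe h₀ hh₀ (by rw [← hh₀]; exact (hcon h₀ hreach₀).1)
  -- Q : half-edges that are tails of ascending oriented edges reachable from v
  have reach_op : ∀ g : T.H, Relation.ReflTransGen T.Adj v (T.vert g) →
      Relation.ReflTransGen T.Adj v (T.vert (T.op g)) := fun g hr =>
    hr.tail ⟨g, rfl, rfl⟩
  have hstep : ∀ p : {g : T.H // T.Ascending R g ∧ Relation.ReflTransGen T.Adj v (T.vert g)},
      ∃ q : {g : T.H // T.Ascending R g ∧ Relation.ReflTransGen T.Adj v (T.vert g)},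
        T.vert (T.op p.1) = T.vert q.1 ∧ T.side (T.op p.1) ≠ T.side q.1 := by
    rintro ⟨g, hga, hgr⟩
    have hr' := reach_op g hgr
    have hint : T.Internal (T.vert (T.op g)) :=
      TurbChart.internal_of_not_fringe (T.op g) rfl ((hcon g hgr).2)
    obtain ⟨g', hv', hs', ha'⟩ := TurbChart.exists_ascending hg hint (!T.side (T.op g))
    refine ⟨⟨g', ha', by rw [hv']; exact hr'⟩, hv'.symm, ?_⟩
    rw [hs']
    simp
  choose nxt hn1 hn2 using hstep
  obtain ⟨g₀, hgv, hgs, ha₀⟩ := TurbChart.exists_ascending hg hvint true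
  have hP₀ : T.Ascending R g₀ ∧ Relation.ReflTransGen T.Adj v (T.vert g₀) :=
    ⟨ha₀, by rw [hgv]⟩
  let F : ℕ → {g : T.H // T.Ascending R g ∧ Relation.ReflTransGen T.Adj v (T.vert g)} :=
    fun n => Nat.rec ⟨g₀, hP₀⟩ (fun _ p => nxt p) n
  let f : ℕ → T.H := fun n => (F n).1
  have link : ∀ n, T.vert (T.op (f n)) = T.vert (f (n + 1)) ∧
      T.side (T.op (f n)) ≠ T.side (f (n + 1)) := fun n => ⟨hn1 (F n), hn2 (F n)⟩
  have hPf : ∀ n, T.Ascending R (f n) := fun n => (F n).2.1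
  obtain ⟨i, j, hij, hfe⟩ := Finite.exists_ne_map_eq_of_infinite f
  have key : ∀ i j : ℕ, i < j → f i = f j → False := by
    clear hij hfe i j
    intro i j hlt hfe
    set n := j - i with hndef
    have hn0 : 0 < n := by omega
    have per : f (i + n) = f i := by
      rw [show i + n = j by omega, hfe]
    have glem : ∀ m : ℕ, f (i + (m + 1) % n) = f (i + m % n + 1) := by
      intro m
      have hr : m % n < n := Nat.mod_lt _ hn0
      rcases Nat.lt_or_ge (m % n + 1) n with hc | hc
      · have hmod : (m + 1) % n = m % n + 1 := by
          conv_lhs => rw [← Nat.mod_add_div m n]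
          rw [show m % n + n * (m / n) + 1 = (m % n + 1) + (m / n) * n by ring,
            Nat.add_mul_mod_self_right, Nat.mod_eq_of_lt hc]
        rw [hmod, ← Nat.add_assoc]
      · have he : m % n + 1 = n := by omega
        have hmod : (m + 1) % n = 0 := by
          conv_lhs => rw [← Nat.mod_add_div m n]
          rw [show m % n + n * (m / n) + 1 = (m / n + 1) * n by
            rw [Nat.add_mul, one_mul, Nat.mul_comm (m / n) n]; omega]
          exact Nat.mul_mod_left _ _
        rw [hmod, Nat.add_zero, ← per, show i + n = i + m % n + 1 by omega]
    have laux : ∀ m : ℕ, T.vert (T.op (f (i + m % n))) = T.vert (f (i + (m + 1) % n)) ∧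
        T.side (T.op (f (i + m % n))) ≠ T.side (f (i + (m + 1) % n)) := by
      intro m
      rw [glem m]
      exact link (i + m % n)
    set l : List T.H := (List.range n).map (fun k => f (i + k % n)) with hldef
    have hlne : l ≠ [] := by
      intro h
      have := congrArg List.length h
      simp [hldef] at this
      omega
    have hll : l ++ l = (List.range (n + n)).map (fun k => f (i + k % n)) := by
      rw [List.range_add, List.map_append, List.map_map]
      congr 1
      apply List.map_congr_left
      intro x hx
      simp only [Function.comp_apply]
      congr 2
      exact (Nat.add_mod_left n x).symm
    have hstr : T.IsString (l ++ l) := by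
      rw [TurbChart.IsString, hll]
      show List.IsChain _ _
      rw [List.isChain_map]
      obtain ⟨M, hM⟩ : ∃ M, n + n = M + 1 := ⟨n + n - 1, by omega⟩
      rw [hM]
      exact (List.isChain_range_succ _ M).2 (fun m _ => laux m)
    have hasc : ∀ x ∈ l, T.Ascending R x := by
      intro x hx
      simp only [hldef, List.mem_map] at hx
      obtain ⟨k, -, rfl⟩ := hx
      exact hPf _
    obtain ⟨p, hband, hpasc⟩ :=
      TurbChart.exists_band_of_cyclic (T.Ascending R) l.length l le_rfl hlne hstr hasc
    exact (hg.2.2.2 p hband).1 hpasc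
  rcases Ne.lt_or_gt hij with h | h
  · exact key i j h hfe
  · exact key j i h hfe.symm
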